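/- The forward map F induces a bijective correspondence between {(ζ_1,ζ_2,ζ_3) ∈ (ℂ²)³ : 1 + ζ_2⁻ζ_2⁺ ≠ 0} and {(l_1,l_2,l_3,u_1,u_2,u_3) ∈ ℂ⁶ : 1 + l_2u_2 ≠ 0}, under the relation F(ζ_1,ζ_2,ζ_3) = (I + l_3E_{32})(I + l_2E_{31})(I + l_1E_{21})·(I + u_3E_{23})(I + u_2E_{13})(I + u_1E_{12}); the inverse correspondence is given by ζ_3⁻ = l_3, ζ_2⁻ = l_2, ζ_1⁻ = (l_1 − l_2u_3)/(1 + l_2u_2), ζ_3⁺ = (u_2l_1 + u_3)/(1 + l_2u_2), ζ_2⁺ = u_2, ζ_1⁺ = u_1. -/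

import Mathlib

open Matrix

noncomputable section

/-- The matrix unit `E_{a b}` (1-indexed) in `gl(n, ℂ)`. -/
def Emat (n a b : ℕ) : Matrix (Fin n) (Fin n) ℂ :=
  Matrix.of fun i j => if (i : ℕ) + 1 = a ∧ (j : ℕ) + 1 = b then 1 else 0

/-- `i_{(p,q)}(ζ) = I + ζ⁻ E_{q p} + ζ⁺ E_{p q} + ζ⁻ ζ⁺ E_{q q}`. -/
def iMat (n : ℕ) (t : ℕ × ℕ) (z : ℂ × ℂ) : Matrix (Fin n) (Fin n) ℂ :=
  1 + z.1 • Emat n t.2 t.1 + z.2 • Emat n t.1 t.2 + (z.1 * z.2) • Emat n t.2 t.2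

/-- The forward map for the reduced factorization `w₀ = s₁s₂s₁` of the longest element of
`S₃` (ordering `τ₁ = (1,2)`, `τ₂ = (1,3)`, `τ₃ = (2,3)`). -/
def F3 (z1 z2 z3 : ℂ × ℂ) : Matrix (Fin 3) (Fin 3) ℂ :=
  iMat 3 (2, 3) z3 * iMat 3 (1, 3) z2 * iMat 3 (1, 2) z1

/-- The lower ordered exponential product `(I + l₃E₃₂)(I + l₂E₃₁)(I + l₁E₂₁)`. -/
def Lmat (l1 l2 l3 : ℂ) : Matrix (Fin 3) (Fin 3) ℂ :=
  (1 + l3 • Emat 3 3 2) * (1 + l2 • Emat 3 3 1) * (1 + l1 • Emat 3 2 1)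

/-- The upper ordered exponential product `(I + u₃E₂₃)(I + u₂E₁₃)(I + u₁E₁₂)`. -/
def Umat (u1 u2 u3 : ℂ) : Matrix (Fin 3) (Fin 3) ℂ :=
  (1 + u3 • Emat 3 2 3) * (1 + u2 • Emat 3 1 3) * (1 + u1 • Emat 3 1 2)

lemma F3_eq (a A b B c C : ℂ) : F3 (a,A) (b,B) (c,C) =
    !![1, A, B;
       a + C*b, 1 + a*A + C*b*A, C*(1+b*B);
       c*a + (1+c*C)*b, c*(1+a*A) + (1+c*C)*b*A, (1+c*C)*(1+b*B)] := by
  ext i j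
  fin_cases i <;> fin_cases j <;>
    simp [F3, iMat, Emat, Matrix.mul_apply, Fin.sum_univ_three, Matrix.one_apply] <;> ring

lemma LU_eq (l1 l2 l3 u1 u2 u3 : ℂ) : Lmat l1 l2 l3 * Umat u1 u2 u3 =
    !![1, u1, u2;
       l1, l1*u1 + 1, l1*u2 + u3;
       l2 + l3*l1, (l2 + l3*l1)*u1 + l3, (l2 + l3*l1)*u2 + l3*u3 + 1] := by
  ext i j
  fin_cases i <;> fin_cases j <;>
    simp [Lmat, Umat, Emat, Matrix.mul_apply, Fin.sum_univ_three, Matrix.one_apply]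

lemma part3 (a A b B c C l1 l2 l3 u1 u2 u3 : ℂ) (hl : 1 + l2 * u2 ≠ 0)
    (h : F3 (a,A) (b,B) (c,C) = Lmat l1 l2 l3 * Umat u1 u2 u3) :
    c = l3 ∧ b = l2 ∧ a = (l1 - l2*u3)/(1 + l2*u2) ∧
      C = (u2*l1 + u3)/(1 + l2*u2) ∧ B = u2 ∧ A = u1 := by
  rw [F3_eq, LU_eq] at h
  have e12 : A = u1 := by have := congrFun (congrFun h 0) 1; simpa using this
  have e13 : B = u2 := by have := congrFun (congrFun h 0) 2; simpa using this
  have e21 : a + C*b = l1 := by have := congrFun (congrFun h 1) 0; simpa using this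
  have e23 : C*(1+b*B) = l1*u2 + u3 := by have := congrFun (congrFun h 1) 2; simpa using this
  have e31 : c*a + (1+c*C)*b = l2 + l3*l1 := by have := congrFun (congrFun h 2) 0; simpa using this
  have e32 : c*(1+a*A) + (1+c*C)*b*A = (l2 + l3*l1)*u1 + l3 := by
    have := congrFun (congrFun h 2) 1; simpa using this
  have hc : c = l3 := by linear_combination e32 - A*e31 - (l2 + l3*l1)*e12
  have hb : b = l2 := by linear_combination e31 - c*e21 - l1*hc
  refine ⟨hc, hb, ?_, ?_, e13, e12⟩
  · rw [eq_div_iff hl]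
    linear_combination (1 + l2*u2)*e21 - l2*e23 - C*hb + C*b*l2*e13
  · rw [eq_div_iff hl]
    linear_combination e23 - C*l2*e13 - C*B*hb

/-- `F` induces a bijective correspondence between
`{ζ : 1 + ζ₂⁻ζ₂⁺ ≠ 0}` and `{(l, u) : 1 + l₂u₂ ≠ 0}` (in ordered exponential coordinates),
with the indicated rational inverse. -/
theorem stmt12 :
    (∀ z1 z2 z3 : ℂ × ℂ, 1 + z2.1 * z2.2 ≠ 0 →
      ∃ l1 l2 l3 u1 u2 u3 : ℂ, 1 + l2 * u2 ≠ 0 ∧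
        F3 z1 z2 z3 = Lmat l1 l2 l3 * Umat u1 u2 u3) ∧
    (∀ l1 l2 l3 u1 u2 u3 : ℂ, 1 + l2 * u2 ≠ 0 →
      ∃! z : (ℂ × ℂ) × (ℂ × ℂ) × (ℂ × ℂ),
        1 + z.2.1.1 * z.2.1.2 ≠ 0 ∧
        F3 z.1 z.2.1 z.2.2 = Lmat l1 l2 l3 * Umat u1 u2 u3) ∧
    (∀ (z1 z2 z3 : ℂ × ℂ) (l1 l2 l3 u1 u2 u3 : ℂ),
      1 + z2.1 * z2.2 ≠ 0 → 1 + l2 * u2 ≠ 0 →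
      F3 z1 z2 z3 = Lmat l1 l2 l3 * Umat u1 u2 u3 →
      z3.1 = l3 ∧ z2.1 = l2 ∧ z1.1 = (l1 - l2 * u3) / (1 + l2 * u2) ∧
      z3.2 = (u2 * l1 + u3) / (1 + l2 * u2) ∧ z2.2 = u2 ∧ z1.2 = u1) := by
  refine ⟨?_, ?_, ?_⟩
  · rintro ⟨a, A⟩ ⟨b, B⟩ ⟨c, C⟩ hz
    refine ⟨a + C*b, b, c, A, B, C*(1+b*B) - (a + C*b)*B, by simpa using hz, ?_⟩
    rw [F3_eq, LU_eq]
    ext i j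
    fin_cases i <;> fin_cases j <;> simp <;> ring
  · intro l1 l2 l3 u1 u2 u3 hl
    refine ⟨(((l1 - l2*u3)/(1 + l2*u2), u1), (l2, u2), (l3, (u2*l1 + u3)/(1 + l2*u2))),
      ⟨by simpa using hl, ?_⟩, ?_⟩
    · have hl' : 1 + u2 * l2 ≠ 0 := by rwa [mul_comm u2 l2]
      rw [F3_eq, LU_eq]
      ext i j
      fin_cases i <;> fin_cases j <;> simp <;> field_simp <;> ring
    · rintro ⟨⟨a, A⟩, ⟨b, B⟩, ⟨c, C⟩⟩ ⟨hz, h⟩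
      obtain ⟨hc, hb, ha, hC, hB, hA⟩ := part3 a A b B c C l1 l2 l3 u1 u2 u3 hl h
      simp_all
  · rintro ⟨a, A⟩ ⟨b, B⟩ ⟨c, C⟩ l1 l2 l3 u1 u2 u3 hz hl h
    obtain ⟨hc, hb, ha, hC, hB, hA⟩ := part3 a A b B c C l1 l2 l3 u1 u2 u3 hl h
    exact ⟨hc, hb, ha, hC, hB, hA⟩
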